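/- Let V be a finite-dimensional real vector space with a nondegenerate symmetric bilinear form, and let φ : V → V be skew-symmetric with respect to it. Then the minimal polynomial P(x) of φ is either an even or an odd polynomial, i.e. P(−x) = ±P(x). -/

import Mathlib

open Polynomial

/-- The minimal polynomial of a skew-symmetric endomorphism of a
finite-dimensional real vector space with a nondegenerate symmetric bilinear form is
either even or odd: `P(-x) = P(x)` or `P(-x) = -P(x)`. -/
theorem minpoly_even_or_odd_of_skew
    (V : Type*) [AddCommGroup V] [Module ℝ V] [FiniteDimensional ℝ V]
    (B : LinearMap.BilinForm ℝ V) (hBnd : B.Nondegenerate) (hBsymm : ∀ x y, B x y = B y x)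
    (φ : Module.End ℝ V) (hskew : ∀ x y, B (φ x) y + B x (φ y) = 0) :
    (minpoly ℝ φ).comp (-X) = minpoly ℝ φ ∨ (minpoly ℝ φ).comp (-X) = -(minpoly ℝ φ) := by
  set P := minpoly ℝ φ with hP
  have hint : IsIntegral ℝ φ := Algebra.IsIntegral.isIntegral φ
  have hmonic : P.Monic := minpoly.monic hint
  have hskew' : ∀ x y, B (φ x) y = B x ((-φ) y) := by
    intro x y
    have := hskew x y
    simp only [LinearMap.neg_apply, map_neg]
    linarith
  -- powers
  have hpow : ∀ (n : ℕ) (x y : V), B ((φ ^ n) x) y = B x (((-φ) ^ n) y) := by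
    intro n
    induction n with
    | zero => intro x y; simp
    | succ n ih =>
      intro x y
      rw [pow_succ', pow_succ]
      simp only [Module.End.mul_apply]
      rw [hskew', ih]
  -- adjoint of aeval
  have haeval : ∀ (p : ℝ[X]) (x y : V),
      B ((Polynomial.aeval φ p) x) y = B x ((Polynomial.aeval (-φ) p) y) := by
    intro p
    induction p using Polynomial.induction_on' with
    | add p q hp hq =>
      intro x y
      simp only [map_add, LinearMap.add_apply, map_add, LinearMap.add_apply]
      rw [hp, hq]
    | monomial n a =>
      intro x y
      simp only [Polynomial.aeval_monomial, Module.End.mul_apply, Module.algebraMap_end_apply,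
        LinearMap.smul_apply, map_smul, smul_eq_mul]
      rw [hpow]
  -- P annihilates -φ
  have hann : Polynomial.aeval (-φ) P = 0 := by
    apply LinearMap.ext
    intro y
    simp only [LinearMap.zero_apply]
    apply hBnd.1
    intro x
    rw [← hBsymm x]
    rw [← haeval P x y, minpoly.aeval]
    simp
  -- hence P divides P.comp (-X)
  have hQann : Polynomial.aeval φ (P.comp (-X)) = 0 := by
    rw [Polynomial.aeval_comp]
    simpa using hann
  have hdvd : P ∣ P.comp (-X) := minpoly.dvd ℝ φ hQann
  have hP0 : P ≠ 0 := minpoly.ne_zero hint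
  have hdegX : (-X : ℝ[X]).natDegree = 1 := by simp
  have hdeg : (P.comp (-X)).natDegree = P.natDegree := by
    rw [Polynomial.natDegree_comp, hdegX, mul_one]
  have hQ0 : P.comp (-X) ≠ 0 := by
    intro h
    have : P = 0 := by
      have := congrArg (fun q => q.comp (-X)) h
      simpa [Polynomial.comp_assoc] using this
    exact hP0 this
  -- leading coefficient of P.comp (-X)
  have hlc : (P.comp (-X)).leadingCoeff = (-1 : ℝ) ^ P.natDegree := by
    rw [Polynomial.leadingCoeff_comp (by rw [hdegX]; exact one_ne_zero)]
    simp [hmonic.leadingCoeff]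
  -- P.comp (-X) = C ((-1)^n) * P
  obtain ⟨r, hr⟩ := hdvd
  have hrdeg : r.natDegree = 0 := by
    have hr0 : r ≠ 0 := by rintro rfl; rw [mul_zero] at hr; exact hQ0 hr
    have := hdeg
    rw [hr, Polynomial.natDegree_mul hP0 hr0] at this
    omega
  have hrC : r = C (r.coeff 0) := (Polynomial.eq_C_of_natDegree_eq_zero hrdeg)
  have hcoef : r.coeff 0 = (-1 : ℝ) ^ P.natDegree := by
    have : (P.comp (-X)).leadingCoeff = P.leadingCoeff * r.leadingCoeff := by
      rw [hr, Polynomial.leadingCoeff_mul]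
    rw [hlc, hmonic.leadingCoeff, one_mul] at this
    rw [Polynomial.leadingCoeff, hrdeg] at this
    exact this.symm
  have hfinal : P.comp (-X) = C ((-1 : ℝ) ^ P.natDegree) * P := by
    rw [hr, hrC, hcoef, mul_comm]
  rcases Nat.even_or_odd P.natDegree with he | ho
  · left; rw [hfinal, he.neg_one_pow]; simp
  · right; rw [hfinal, ho.neg_one_pow]; simp
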